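/- arXiv:2403.07961 — 6 statements merged into one kernel-verified Lean document; each statement's English description precedes it below -/
import Mathlib

section
/- Let p > 1 and a = 1 - 2^{-1/(p+1)}. Define h_{1,1}(x) = ((1-(1-a)^p)/a)·min(x,a), and h_{1,2,(0)}(x) = 1_{[0,a]}(x)·((1-(1-x)^p) - (x/a)(1-(1-a)^p)). Then ∫₀¹ (h_{1,1}(x) + h_{1,2,(0)}(x)) dx = (1/2)·p/(p+1). -/
open intervalIntegral Set MeasureTheory

theorem integral_h11_plus_h120 (p a : ℝ) (hp : 1 < p)
    (ha : a = 1 - 2 ^ (-(1 / (p + 1))) ) :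
    ∫ x in (0:ℝ)..1,
        (((1 - (1 - a) ^ p) / a) * min x a
          + Set.indicator (Set.Icc 0 a)
              (fun x => (1 - (1 - x) ^ p) - (x / a) * (1 - (1 - a) ^ p)) x)
      = (1 / 2) * (p / (p + 1)) := by
  have hp1 : (0:ℝ) < p + 1 := by linarith
  have hu : (0:ℝ) < 2 ^ (-(1 / (p + 1))) := Real.rpow_pos_of_pos (by norm_num) _
  have hu1 : (2:ℝ) ^ (-(1 / (p + 1))) < 1 :=
    Real.rpow_lt_one_of_one_lt_of_neg (by norm_num) (neg_lt_zero.mpr (by positivity))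
  have ha0 : 0 < a := by rw [ha]; linarith
  have ha1 : a < 1 := by rw [ha]; linarith
  have h1a : (0:ℝ) < 1 - a := by linarith
  have key : (1 - a) ^ (p + 1) = 1 / 2 := by
    have h2 : (1:ℝ) - a = 2 ^ (-(1 / (p + 1))) := by rw [ha]; ring
    rw [h2, ← Real.rpow_mul (by norm_num : (0:ℝ) ≤ 2)]
    have : -(1 / (p + 1)) * (p + 1) = -1 := by field_simp
    rw [this]
    rw [Real.rpow_neg_one]
    norm_num
  set f : ℝ → ℝ := fun x =>
    ((1 - (1 - a) ^ p) / a) * min x a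
      + Set.indicator (Set.Icc 0 a)
          (fun x => (1 - (1 - x) ^ p) - (x / a) * (1 - (1 - a) ^ p)) x with hf
  -- continuous comparison functions
  have hg1cont : Continuous fun x : ℝ => 1 - (1 - x) ^ p :=
    continuous_const.sub ((continuous_const.sub continuous_id).rpow_const
      (fun x => Or.inr (by linarith)))
  have heq1 : EqOn f (fun x => 1 - (1 - x) ^ p) (Set.uIcc 0 a) := by
    intro x hx
    rw [Set.uIcc_of_le ha0.le] at hx
    have hxa : x ≤ a := hx.2
    have hx0 : 0 ≤ x := hx.1
    simp only [hf, min_eq_left hxa, Set.indicator_of_mem (Set.mem_Icc.mpr ⟨hx0, hxa⟩)]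
    ring
  have heq2 : EqOn f (fun _ => 1 - (1 - a) ^ p) (Set.uIcc a 1) := by
    intro x hx
    rw [Set.uIcc_of_le ha1.le] at hx
    have hax : a ≤ x := hx.1
    simp only [hf, min_eq_right hax]
    rcases eq_or_lt_of_le hax with h | h
    · rw [Set.indicator_of_mem (by simp [← h, ha0.le] : x ∈ Set.Icc 0 a)]
      rw [← h]
      field_simp
      ring
    · rw [Set.indicator_of_notMem (by simp [Set.mem_Icc]; intro _; linarith)]
      field_simp
      ring
  have hint1 : IntervalIntegrable f volume 0 a := by
    rw [intervalIntegrable_iff_integrableOn_Ioc_of_le ha0.le]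
    exact (hg1cont.integrableOn_Ioc).congr_fun
      (fun x hx => (heq1 ((Set.Ioc_subset_Icc_self.trans
        (by rw [Set.uIcc_of_le ha0.le])) hx)).symm) measurableSet_Ioc
  have hint2 : IntervalIntegrable f volume a 1 := by
    rw [intervalIntegrable_iff_integrableOn_Ioc_of_le ha1.le]
    exact (continuous_const.integrableOn_Ioc).congr_fun
      (fun x hx => (heq2 ((Set.Ioc_subset_Icc_self.trans
        (by rw [Set.uIcc_of_le ha1.le])) hx)).symm) measurableSet_Ioc
  have hsplit : ∫ x in (0:ℝ)..1, f x = (∫ x in (0:ℝ)..a, f x) + ∫ x in a..1, f x :=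
    (integral_add_adjacent_intervals hint1 hint2).symm
  have hI1 : ∫ x in (0:ℝ)..a, f x = a - (1 - (1 - a) ^ (p + 1)) / (p + 1) := by
    rw [integral_congr heq1]
    have : ∫ x in (0:ℝ)..a, (1 - (1 - x) ^ p) =
        (∫ x in (0:ℝ)..a, (1:ℝ)) - ∫ x in (0:ℝ)..a, (1 - x) ^ p := by
      apply integral_sub intervalIntegrable_const
      exact ((continuous_const.sub continuous_id).rpow_const
        (fun x => Or.inr (by linarith))).intervalIntegrable _ _
    rw [this, intervalIntegral.integral_const]
    have hcomp : ∫ x in (0:ℝ)..a, (1 - x) ^ p = ∫ x in (1-a)..(1-0), x ^ p :=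
      integral_comp_sub_left (fun x => x ^ p) 1
    rw [hcomp]
    simp only [sub_zero]
    rw [integral_rpow (Or.inl (by linarith : (-1:ℝ) < p)), Real.one_rpow, smul_eq_mul]
    ring
  have hI2 : ∫ x in a..1, f x = (1 - a) * (1 - (1 - a) ^ p) := by
    rw [integral_congr heq2, intervalIntegral.integral_const, smul_eq_mul]
  rw [hsplit, hI1, hI2, key]
  have hpow : (1 - a) * (1 - a) ^ p = (1:ℝ) / 2 := by
    rw [← key, Real.rpow_add_one h1a.ne']
    ring
  field_simp
  nlinarith [hpow]
end

section
/- Let p > 1 and a = 1 - 2^{-1/(p+1)}. Define h_{1,1}(x) = ((1-(1-a)^p)/a)·min(x,a), and h_{1,2,(1)}(x) = 1_{[a,1]}(x)·((1-(1-x)^p) - (1-(1-a)^p)). Then ∫₀¹ (h_{1,1}(x) + h_{1,2,(1)}(x)) dx = (1/2)·p/(p+1) + (1 + 2^{p/(p+1)} - 2^{1/(p+1)})/4. -/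
theorem integral_h11_plus_h121 (p a : ℝ) (hp : 1 < p)
    (ha : a = 1 - 2 ^ (-(1 / (p + 1))) ) :
    ∫ x in (0:ℝ)..1,
        (((1 - (1 - a) ^ p) / a) * min x a
          + Set.indicator (Set.Icc a 1)
              (fun x => (1 - (1 - x) ^ p) - (1 - (1 - a) ^ p)) x)
      = (1 / 2) * (p / (p + 1)) + (1 + 2 ^ (p / (p + 1)) - 2 ^ (1 / (p + 1))) / 4 := by
  have hq : (0:ℝ) < p + 1 := by linarith
  have hq' : p + 1 ≠ 0 := ne_of_gt hq
  set t : ℝ := 2 ^ (-(1 / (p + 1))) with htdef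
  have ht0 : 0 < t := Real.rpow_pos_of_pos two_pos _
  have ht1 : t < 1 := by
    apply Real.rpow_lt_one_of_one_lt_of_neg one_lt_two
    have : 0 < 1 / (p + 1) := by positivity
    linarith
  have ha0 : 0 < a := by rw [ha]; linarith
  have ha1 : a < 1 := by rw [ha]; linarith
  have hb : 1 - a = t := by rw [ha]; ring
  set s : ℝ := t ^ p with hsdef
  have hs0 : 0 < s := Real.rpow_pos_of_pos ht0 _
  have hts : t * s = 1 / 2 := by
    rw [hsdef, htdef, ← Real.rpow_mul (by norm_num : (0:ℝ) ≤ 2),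
      ← Real.rpow_add two_pos]
    rw [show -(1 / (p + 1)) + -(1 / (p + 1)) * p = -1 by field_simp; ring]
    norm_num
  have h2p : (2:ℝ) ^ (p / (p + 1)) = 2 * t := by
    rw [show p / (p+1) = 1 + -(1 / (p + 1)) by field_simp; ring,
      Real.rpow_add two_pos, Real.rpow_one, htdef]
  have h21 : (2:ℝ) ^ (1 / (p + 1)) = t⁻¹ := by
    rw [htdef, ← Real.rpow_neg (by norm_num : (0:ℝ) ≤ 2), neg_neg]
  rw [hb, ← hsdef]
  have hpp : (0:ℝ) ≤ p := by linarith
  have hcont1 : Continuous fun x : ℝ => ((1 - s) / a) * min x a :=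
    continuous_const.mul (continuous_id.min continuous_const)
  have hcontr : Continuous fun x : ℝ => (1 - x) ^ p :=
    (continuous_const.sub continuous_id).rpow_const fun x => Or.inr hpp
  have hcontf : Continuous fun x : ℝ => (1 - (1 - x) ^ p) - (1 - s) :=
    (continuous_const.sub hcontr).sub continuous_const
  have hind : ∀ c d : ℝ, IntervalIntegrable
      ((Set.Icc a 1).indicator fun x => (1 - (1 - x) ^ p) - (1 - s)) MeasureTheory.volume c d := by
    intro c d
    have h := hcontf.intervalIntegrable (μ := MeasureTheory.volume) c d
    rw [intervalIntegrable_iff] at h ⊢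
    exact h.indicator measurableSet_Icc
  have hadd : ∫ x in (0:ℝ)..1,
      (((1 - s) / a) * min x a
        + Set.indicator (Set.Icc a 1) (fun x => (1 - (1 - x) ^ p) - (1 - s)) x)
      = (∫ x in (0:ℝ)..1, ((1 - s) / a) * min x a)
        + ∫ x in (0:ℝ)..1,
            Set.indicator (Set.Icc a 1) (fun x => (1 - (1 - x) ^ p) - (1 - s)) x :=
    intervalIntegral.integral_add (hcont1.intervalIntegrable _ _) (hind 0 1)
  rw [hadd]
  have I1 : (∫ x in (0:ℝ)..1, ((1 - s) / a) * min x a)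
      = (1 - s) / a * (a ^ 2 / 2) + (1 - a) * ((1 - s) / a * a) := by
    rw [← intervalIntegral.integral_add_adjacent_intervals
      (hcont1.intervalIntegrable 0 a) (hcont1.intervalIntegrable a 1)]
    have e1 : (∫ x in (0:ℝ)..a, ((1 - s) / a) * min x a)
        = ∫ x in (0:ℝ)..a, ((1 - s) / a) * x := by
      apply intervalIntegral.integral_congr
      intro x hx
      rw [Set.uIcc_of_le ha0.le] at hx
      simp [min_eq_left hx.2]
    have e2 : (∫ x in a..(1:ℝ), ((1 - s) / a) * min x a)
        = ∫ x in a..(1:ℝ), ((1 - s) / a) * a := by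
      apply intervalIntegral.integral_congr
      intro x hx
      rw [Set.uIcc_of_le ha1.le] at hx
      simp [min_eq_right hx.1]
    rw [e1, e2, intervalIntegral.integral_const_mul, integral_id,
      intervalIntegral.integral_const, smul_eq_mul]
    ring
  have I2 : (∫ x in (0:ℝ)..1,
      Set.indicator (Set.Icc a 1) (fun x => (1 - (1 - x) ^ p) - (1 - s)) x)
      = (1 - a) * s - (1 - a) ^ (p + 1) / (p + 1) := by
    rw [← intervalIntegral.integral_add_adjacent_intervals (hind 0 a) (hind a 1)]
    have e1 : (∫ x in (0:ℝ)..a,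
        Set.indicator (Set.Icc a 1) (fun x => (1 - (1 - x) ^ p) - (1 - s)) x)
        = ∫ x in (0:ℝ)..a, (0:ℝ) := by
      apply intervalIntegral.integral_congr
      intro x hx
      rw [Set.uIcc_of_le ha0.le] at hx
      by_cases hxa : x ∈ Set.Icc a 1
      · have hxeq : x = a := le_antisymm hx.2 hxa.1
        rw [Set.indicator_of_mem hxa]
        simp [hxeq, hb, hsdef]
      · rw [Set.indicator_of_notMem hxa]
    have e2 : (∫ x in a..(1:ℝ),
        Set.indicator (Set.Icc a 1) (fun x => (1 - (1 - x) ^ p) - (1 - s)) x)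
        = ∫ x in a..(1:ℝ), (s - (1 - x) ^ p) := by
      apply intervalIntegral.integral_congr
      intro x hx
      rw [Set.uIcc_of_le ha1.le] at hx
      rw [Set.indicator_of_mem hx]
      ring
    have e3 : (∫ x in a..(1:ℝ), (s - (1 - x) ^ p))
        = (∫ x in a..(1:ℝ), (s:ℝ)) - ∫ x in a..(1:ℝ), (1 - x) ^ p :=
      intervalIntegral.integral_sub intervalIntegrable_const
        (hcontr.intervalIntegrable _ _)
    have e4 : (∫ x in a..(1:ℝ), (1 - x) ^ p) = (1 - a) ^ (p + 1) / (p + 1) := by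
      rw [intervalIntegral.integral_comp_sub_left (fun u => u ^ p) 1]
      rw [show (1:ℝ) - 1 = 0 by ring]
      rw [integral_rpow (Or.inl (by linarith : (-1:ℝ) < p))]
      rw [Real.zero_rpow hq']
      ring
    rw [e1, e2, e3, e4, intervalIntegral.integral_zero,
      intervalIntegral.integral_const, smul_eq_mul]
    ring
  rw [I1, I2, h2p, h21, hb]
  have htp1 : t ^ (p + 1) = t * s := by
    rw [Real.rpow_add ht0, Real.rpow_one, hsdef]; ring
  have hs : s = 1 / (2 * t) := by
    rw [eq_div_iff (by positivity : (2:ℝ) * t ≠ 0)]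
    linear_combination 2 * hts
  have ha' : a = 1 - t := by linarith
  rw [htp1, ha', hs]
  have h1t : (1:ℝ) - t ≠ 0 := by linarith
  have ht0' : t ≠ 0 := ne_of_gt ht0
  field_simp
  ring
end

section
/- Let p > 1 and set β = (1/2)·p/(p+1) + (1 + 2^{p/(p+1)} - 2^{1/(p+1)})/4. Then β < p/(p+1). -/
open Real

lemma key_aux (t : ℝ) (ht1 : 1/2 < t) (ht2 : t < 1) :
    Real.exp (Real.log 2 * t) - Real.exp (Real.log 2 * (1 - t)) < 2 * t - 1 := by
  set L := Real.log 2 with hL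
  have hLpos : 0 < L := Real.log_pos (by norm_num)
  set g : ℝ → ℝ := fun x => Real.exp (L * x) - Real.exp (L * (1 - x)) with hg
  have hd1 : ∀ x : ℝ, HasDerivAt g (L * Real.exp (L * x) + L * Real.exp (L * (1 - x))) x := by
    intro x
    have h1 : HasDerivAt (fun x : ℝ => Real.exp (L * x)) (Real.exp (L * x) * L) x := by
      simpa using (((hasDerivAt_id x).const_mul L).exp)
    have h2 : HasDerivAt (fun x : ℝ => Real.exp (L * (1 - x))) (Real.exp (L * (1 - x)) * (L * (-1))) x := by
      have : HasDerivAt (fun x : ℝ => L * (1 - x)) (L * (-1)) x := by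
        simpa using (((hasDerivAt_id x).const_sub 1).const_mul L)
      exact (Real.hasDerivAt_exp (L * (1 - x))).comp x this
    have := h1.sub h2
    exact this.congr_deriv (by ring)
  have hderiv : deriv g = fun x => L * Real.exp (L * x) + L * Real.exp (L * (1 - x)) := by
    funext x; exact (hd1 x).deriv
  have hd2 : ∀ x : ℝ, HasDerivAt (deriv g)
      (L * L * (Real.exp (L * x) - Real.exp (L * (1 - x)))) x := by
    intro x
    rw [hderiv]
    have h1 : HasDerivAt (fun x : ℝ => Real.exp (L * x)) (Real.exp (L * x) * L) x := by
      simpa using (((hasDerivAt_id x).const_mul L).exp)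
    have h2 : HasDerivAt (fun x : ℝ => Real.exp (L * (1 - x))) (Real.exp (L * (1 - x)) * (L * (-1))) x := by
      have : HasDerivAt (fun x : ℝ => L * (1 - x)) (L * (-1)) x := by
        simpa using (((hasDerivAt_id x).const_sub 1).const_mul L)
      exact (Real.hasDerivAt_exp (L * (1 - x))).comp x this
    have := (h1.const_mul L).add (h2.const_mul L)
    exact this.congr_deriv (by ring)
  have hconv : StrictConvexOn ℝ (Set.Icc (1/2 : ℝ) 1) g := by
    apply strictConvexOn_of_deriv2_pos (convex_Icc _ _)
    · exact Continuous.continuousOn (by continuity)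
    · intro x hx
      rw [interior_Icc, Set.mem_Ioo] at hx
      have : deriv (deriv g) x = L * L * (Real.exp (L * x) - Real.exp (L * (1 - x))) :=
        (hd2 x).deriv
      simp only [Function.iterate_succ, Function.iterate_zero, Function.comp_apply, id_eq]
      rw [this]
      have hlt : Real.exp (L * (1 - x)) < Real.exp (L * x) := by
        apply Real.exp_lt_exp.2
        have : 1 - x < x := by linarith [hx.1]
        nlinarith
      have := mul_pos (mul_pos hLpos hLpos) (sub_pos.2 hlt)
      linarith
  have h12 : (1/2 : ℝ) ∈ Set.Icc (1/2 : ℝ) 1 := by constructor <;> norm_num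
  have h1 : (1 : ℝ) ∈ Set.Icc (1/2 : ℝ) 1 := by constructor <;> norm_num
  have hab : (2 - 2*t) + (2*t - 1) = 1 := by ring
  have := hconv.2 h12 h1 (by norm_num : (1/2:ℝ) ≠ 1)
    (show (0:ℝ) < 2 - 2*t by linarith) (show (0:ℝ) < 2*t - 1 by linarith) hab
  simp only [smul_eq_mul] at this
  have hx : (2 - 2*t) * (1/2 : ℝ) + (2*t - 1) * 1 = t := by ring
  rw [hx] at this
  have hg12 : g (1/2) = 0 := by
    simp [hg]
    norm_num
  have hg1 : g 1 = 1 := by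
    simp [hg, hL, Real.exp_log]
    norm_num
  rw [hg12, hg1] at this
  show g t < 2 * t - 1
  nlinarith [this]

theorem beta_lt (p : ℝ) (hp : 1 < p) :
    (1 / 2) * (p / (p + 1)) + (1 + 2 ^ (p / (p + 1)) - 2 ^ (1 / (p + 1))) / 4
      < p / (p + 1) := by
  have hp1 : (0:ℝ) < p + 1 := by linarith
  set t := p / (p + 1) with ht
  have ht1 : 1/2 < t := by rw [ht, lt_div_iff₀ hp1]; linarith
  have ht2 : t < 1 := by rw [ht, div_lt_one hp1]; linarith
  have hinv : 1 / (p + 1) = 1 - t := by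
    rw [ht]
    field_simp
    ring
  rw [hinv]
  have h2t : (2:ℝ) ^ t = Real.exp (Real.log 2 * t) := by
    rw [Real.rpow_def_of_pos (by norm_num)]
  have h2t' : (2:ℝ) ^ (1 - t) = Real.exp (Real.log 2 * (1 - t)) := by
    rw [Real.rpow_def_of_pos (by norm_num)]
  rw [h2t, h2t']
  have := key_aux t ht1 ht2
  linarith
end

section
/- Let p > 1 and β_spline = sup_{y ∈ [0,1]} (1-(1-y)^p)(1 - y/2). Then β_spline < p/(p+1), i.e., the supremum of ∫₀¹ s_y(x) dx over y is strictly less than ∫₀¹ (1-(1-x)^p) dx. -/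
open intervalIntegral Set

private lemma pow_cont (p : ℝ) (hp : 0 ≤ p) :
    Continuous (fun x : ℝ => (1 - x) ^ p) := by
  have h := (Real.continuous_rpow_const hp).comp (continuous_const.sub continuous_id (f := fun x : ℝ => (1:ℝ)))
  exact h

private lemma phi_cont (p : ℝ) (hp : 0 ≤ p) :
    Continuous (fun x : ℝ => 1 - (1 - x) ^ p) :=
  continuous_const.sub (pow_cont p hp)

private lemma key (p : ℝ) (hp : 1 < p) {y : ℝ} (hy0 : 0 ≤ y) (hy1 : y ≤ 1) :
    (1 - (1 - y) ^ p) * (1 - y / 2) < p / (p + 1) := by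
  have hp0 : (0:ℝ) < p := by linarith
  have hp1 : (0:ℝ) < p + 1 := by linarith
  have hhalf : (1:ℝ)/2 < p / (p+1) := by
    rw [div_lt_div_iff₀ (by norm_num) hp1]; linarith
  set φ : ℝ → ℝ := fun x => 1 - (1 - x) ^ p with hφ
  have hc : Continuous φ := phi_cont p hp0.le
  rcases eq_or_lt_of_le hy0 with h0 | h0
  · simp [φ, ← h0, Real.one_rpow]; positivity
  rcases eq_or_lt_of_le hy1 with h1 | h1
  · rw [h1]
    simp [Real.zero_rpow (ne_of_gt hp0)]
    linarith [hhalf]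
  -- now 0 < y < 1
  have hint : ∀ a b : ℝ, IntervalIntegrable φ MeasureTheory.volume a b :=
    fun a b => (hc.intervalIntegrable a b)
  have I1 : ∫ x in (0:ℝ)..1, φ x = p / (p + 1) := by
    have h2 : ∫ x in (0:ℝ)..1, (1 - x) ^ p = 1 / (p + 1) := by
      have := intervalIntegral.integral_comp_sub_left (fun x : ℝ => x ^ p) 1
        (a := 0) (b := 1)
      rw [this]
      norm_num
      rw [integral_rpow (Or.inl (by linarith))]
      rw [Real.zero_rpow (by positivity), Real.one_rpow]
      ring
    rw [hφ]
    rw [intervalIntegral.integral_sub (intervalIntegrable_const)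
      ((pow_cont p hp0.le).intervalIntegrable 0 1), h2]
    simp
    field_simp
    ring
  -- part A : chord below φ on [0, y]
  have hA : φ y * (y / 2) ≤ ∫ x in (0:ℝ)..y, φ x := by
    have hmono : ∀ x ∈ Icc (0:ℝ) y, (φ y / y) * x ≤ φ x := by
      intro x hx
      obtain ⟨hx0, hxy⟩ := hx
      have hm1 : (1 - y) ∈ Set.Ici (0:ℝ) := by simp only [Set.mem_Ici]; linarith
      have hm2 : (1:ℝ) ∈ Set.Ici (0:ℝ) := by simp only [Set.mem_Ici]; norm_num
      have hw0 : 0 ≤ x / y := by positivity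
      have hw1 : x / y ≤ 1 := by rw [div_le_one h0]; exact hxy
      have hsum : x / y + (1 - x / y) = 1 := by ring
      have := (convexOn_rpow hp.le).2 hm1 hm2 hw0 (by linarith) hsum
      simp only [smul_eq_mul] at this
      have hcomb : x / y * (1 - y) + (1 - x / y) * 1 = 1 - x := by
        field_simp; ring
      rw [hcomb, Real.one_rpow] at this
      -- this : (1 - x) ^ p ≤ x / y * (1 - y) ^ p + (1 - x / y)
      simp only [hφ]
      have : 1 - (x / y * (1 - y) ^ p + (1 - x / y)) ≤ 1 - (1 - x) ^ p := by linarith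
      calc φ y / y * x = 1 - (x / y * (1 - y) ^ p + (1 - x / y)) := by
            simp only [hφ]; field_simp; ring
        _ ≤ 1 - (1 - x) ^ p := this
    have hmle : (∫ x in (0:ℝ)..y, (φ y / y) * x) ≤ ∫ x in (0:ℝ)..y, φ x := by
      apply intervalIntegral.integral_mono_on h0.le
        ((continuous_const.mul continuous_id).intervalIntegrable 0 y) (hint 0 y) hmono
    calc φ y * (y / 2) = ∫ x in (0:ℝ)..y, (φ y / y) * x := by
          rw [intervalIntegral.integral_const_mul, integral_id]
          field_simp; ring
      _ ≤ _ := hmle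
  -- part B : strict on [y, 1]
  have hB : (1 - y) * φ y < ∫ x in y..1, φ x := by
    have hpos : 0 < ∫ x in y..1, (φ x - φ y) := by
      apply intervalIntegral.intervalIntegral_pos_of_pos_on
        ((hc.sub continuous_const).intervalIntegrable y 1)
      · intro x hx
        obtain ⟨hyx, hx1⟩ := hx
        have hrp : (1 - x) ^ p < (1 - y) ^ p :=
          Real.rpow_lt_rpow (by linarith) (by linarith) hp0
        simp only [hφ, Pi.sub_apply]; linarith
      · exact h1
    rw [intervalIntegral.integral_sub (hint y 1) intervalIntegrable_const,
      intervalIntegral.integral_const, smul_eq_mul] at hpos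
    linarith
  have hsplit : (∫ x in (0:ℝ)..y, φ x) + ∫ x in y..1, φ x = ∫ x in (0:ℝ)..1, φ x :=
    intervalIntegral.integral_add_adjacent_intervals (hint 0 y) (hint y 1)
  have : φ y * (1 - y / 2) < p / (p + 1) := by
    have : φ y * (1 - y / 2) = φ y * (y / 2) + (1 - y) * φ y := by ring
    rw [this, ← I1, ← hsplit]
    exact add_lt_add_of_le_of_lt hA hB
  exact this

theorem spline_beta_lt (p : ℝ) (hp : 1 < p) :
    sSup ((fun y => (1 - (1 - y) ^ p) * (1 - y / 2)) '' Set.Icc (0:ℝ) 1)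
      < p / (p + 1) := by
  have hp0 : (0:ℝ) ≤ p := by linarith
  have hc : Continuous (fun y : ℝ => (1 - (1 - y) ^ p) * (1 - y / 2)) :=
    (phi_cont p hp0).mul (continuous_const.sub (continuous_id.div_const 2))
  have hcomp : IsCompact ((fun y => (1 - (1 - y) ^ p) * (1 - y / 2)) '' Set.Icc (0:ℝ) 1) :=
    (isCompact_Icc).image hc
  have hne : ((fun y => (1 - (1 - y) ^ p) * (1 - y / 2)) '' Set.Icc (0:ℝ) 1).Nonempty :=
    (Set.nonempty_Icc.2 (by norm_num)).image _
  have hmem := hcomp.sSup_mem hne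
  obtain ⟨y, hy, hval⟩ := hmem
  rw [← hval]
  exact key p hp hy.1 hy.2
end

section
/- Let p > 1 and q = p/(p-1). Then sup_{y ∈ (0,1]} (1-(1-y)^p)/y^{1/p} < p/(p+1)^{1/q}, i.e., the maximal spline derivative norm α is strictly smaller than the L_q norm of h₁' where h₁(x) = 1-(1-x)^p. -/
open MeasureTheory Real Set

/-- `p/(p+1)^(1/q) > 1`. -/
lemma aux_one_lt_c (p q : ℝ) (hp : 1 < p) (hq : q = p / (p - 1)) :
    1 < p / (p + 1) ^ (1 / q) := by
  have hp0 : (0:ℝ) < p := by linarith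
  have hp1 : (0:ℝ) < p - 1 := by linarith
  have hq0 : (0:ℝ) < q := by rw [hq]; positivity
  have hiq : 1 / q = (p - 1) / p := by rw [hq]; field_simp
  -- log p > 1 - 1/p
  have h1 : Real.log (1/p) < 1/p - 1 :=
    Real.log_lt_sub_one_of_pos (by positivity) (by
      intro h
      have : p = 1 := by field_simp at h; linarith
      linarith)
  have hlogp : 1 - 1/p < Real.log p := by
    have h1' : Real.log (1/p) = -Real.log p := by
      rw [one_div, Real.log_inv]
    linarith [h1, h1'.symm.trans_lt h1]
  -- log(p+1) < log p + 1/p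
  have h2 : Real.log ((p+1)/p) < (p+1)/p - 1 :=
    Real.log_lt_sub_one_of_pos (by positivity) (by
      intro h
      field_simp at h; linarith)
  have h3 : Real.log ((p+1)/p) = Real.log (p+1) - Real.log p :=
    Real.log_div (by positivity) (by positivity)
  have h4 : (p+1)/p - 1 = 1/p := by field_simp; ring
  have hlogp1 : Real.log (p+1) < Real.log p + 1/p := by
    rw [h3, h4] at h2; linarith
  -- key log inequality
  have hkey : Real.log (p+1) * (1/q) < Real.log p := by
    rw [hiq, mul_div_assoc', div_lt_iff₀ hp0]
    have e1 : Real.log (p+1) * (p-1) < (Real.log p + 1/p) * (p-1) :=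
      mul_lt_mul_of_pos_right hlogp1 hp1
    have hop : (1/p) * p = 1 := by field_simp
    nlinarith [e1, hop, hlogp]
  have hlt : (p+1) ^ (1/q) < p := by
    rw [Real.rpow_def_of_pos (by positivity)]
    calc Real.exp (Real.log (p+1) * (1/q)) < Real.exp (Real.log p) :=
          Real.exp_lt_exp.mpr hkey
      _ = p := Real.exp_log hp0
  rw [lt_div_iff₀ (by positivity)]
  linarith

/-- Hölder inequality applied on `[0, y]`. -/
lemma aux_holder (p q : ℝ) (hp : 1 < p) (hq : q = p / (p - 1)) {y : ℝ}
    (hy : y ∈ Set.Ioc (0:ℝ) 1) :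
    1 - (1 - y) ^ p ≤
      p / (p + 1) ^ (1 / q) * (1 - (1 - y) ^ (p + 1)) ^ (1 / q) * y ^ (1 / p) := by
  have hp0 : (0:ℝ) < p := by linarith
  have hp1 : (0:ℝ) < p - 1 := by linarith
  have hq1 : 1 < q := by
    rw [hq, lt_div_iff₀ hp1]; linarith
  have hq0 : (0:ℝ) < q := by linarith
  have hy0 : 0 < y := hy.1
  have hy1 : y ≤ 1 := hy.2
  have hpq : p.HolderConjugate q := by
    rw [hq]; exact Real.HolderConjugate.conjExponent hp
  set μ := volume.restrict (Set.Ioc (0:ℝ) y) with hμ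
  set g : ℝ → ℝ := fun x => p * (1 - x) ^ (p - 1) with hg
  have hgmeas : Measurable g := by fun_prop
  have hgae : ∀ᵐ x ∂μ, x ∈ Set.Ioc (0:ℝ) y := ae_restrict_mem measurableSet_Ioc
  have hg_nonneg : 0 ≤ᵐ[μ] g := by
    filter_upwards [hgae] with x hx
    have hx1 : 1 - x ≥ 0 := by
      have := hx.2; linarith
    positivity
  have hg_bdd : ∀ᵐ x ∂μ, ‖g x‖ ≤ p := by
    filter_upwards [hgae] with x hx
    have hx1 : (0:ℝ) ≤ 1 - x := by have := hx.2; linarith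
    have hle : (1 - x) ^ (p - 1) ≤ 1 :=
      Real.rpow_le_one hx1 (by have := hx.1; linarith) (by linarith)
    rw [hg, Real.norm_of_nonneg (by positivity)]
    exact mul_le_of_le_one_right hp0.le hle
  have hgmem : MemLp g (ENNReal.ofReal q) μ :=
    MemLp.of_bound hgmeas.aestronglyMeasurable p hg_bdd
  have hfmem : MemLp (fun _ : ℝ => (1:ℝ)) (ENNReal.ofReal p) μ := memLp_const 1
  have hf_nonneg : 0 ≤ᵐ[μ] (fun _ : ℝ => (1:ℝ)) :=
    Filter.Eventually.of_forall (fun _ => zero_le_one)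
  have holder := MeasureTheory.integral_mul_le_Lp_mul_Lq_of_nonneg hpq
    hf_nonneg hg_nonneg hfmem hgmem
  -- compute the three integrals
  have hI2 : ∫ x, (fun _ : ℝ => (1:ℝ)) x * g x ∂μ = 1 - (1 - y) ^ p := by
    simp only [one_mul]
    rw [hμ, ← intervalIntegral.integral_of_le hy0.le, hg]
    rw [intervalIntegral.integral_const_mul]
    have := intervalIntegral.integral_comp_sub_left (a := (0:ℝ)) (b := y)
      (fun x => x ^ (p - 1)) 1
    rw [this, integral_rpow (Or.inl (by linarith))]
    rw [sub_zero, sub_add_cancel, Real.one_rpow]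
    field_simp
  have hI1 : ∫ x, ((fun _ : ℝ => (1:ℝ)) x) ^ p ∂μ = y := by
    simp only [Real.one_rpow]
    rw [hμ, integral_const]
    simp [Real.volume_Ioc, ENNReal.toReal_ofReal hy0.le, hy0.le]
  have hI3 : ∫ x, (g x) ^ q ∂μ = p ^ q * ((1 - (1 - y) ^ (p + 1)) / (p + 1)) := by
    rw [hμ]
    have hcongr : ∀ x ∈ Set.Ioc (0:ℝ) y, (g x) ^ q = p ^ q * (1 - x) ^ p := by
      intro x hx
      have hx1 : (0:ℝ) ≤ 1 - x := by have := hx.2; linarith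
      rw [hg]
      rw [Real.mul_rpow hp0.le (Real.rpow_nonneg hx1 _)]
      rw [← Real.rpow_mul hx1]
      congr 2
      rw [hq]; field_simp
    rw [MeasureTheory.setIntegral_congr_fun measurableSet_Ioc hcongr]
    rw [← intervalIntegral.integral_of_le hy0.le,
      intervalIntegral.integral_const_mul]
    have := intervalIntegral.integral_comp_sub_left (a := (0:ℝ)) (b := y)
      (fun x => x ^ p) 1
    rw [this, integral_rpow (Or.inl (by linarith))]
    rw [sub_zero, Real.one_rpow]
  rw [hI1, hI2, hI3] at holder
  refine holder.trans (le_of_eq ?_)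
  have hA0 : (0:ℝ) ≤ 1 - (1 - y) ^ (p + 1) := by
    have : (1 - y) ^ (p + 1) ≤ 1 :=
      Real.rpow_le_one (by linarith) (by linarith) (by linarith)
    linarith
  have h5 : (p ^ q) ^ (1/q) = p := by
    rw [← Real.rpow_mul hp0.le, mul_one_div, div_self (ne_of_gt hq0), Real.rpow_one]
  have h6 : ((p+1)⁻¹ : ℝ) ^ (1/q) = ((p+1) ^ (1/q) : ℝ)⁻¹ :=
    Real.inv_rpow (by positivity) _
  have h7 : ((p:ℝ)+1) ^ (1/q) ≠ 0 := by positivity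
  rw [div_eq_mul_inv (1 - (1 - y) ^ (p+1)),
    Real.mul_rpow (by positivity) (mul_nonneg hA0 (by positivity)),
    Real.mul_rpow hA0 (by positivity), h5, h6]
  field_simp

theorem spline_alpha_lt (p q : ℝ) (hp : 1 < p) (hq : q = p / (p - 1)) :
    sSup ((fun y => (1 - (1 - y) ^ p) / y ^ (1 / p)) '' Set.Ioc (0:ℝ) 1)
      < p / (p + 1) ^ (1 / q) := by
  have hp0 : (0:ℝ) < p := by linarith
  have hp1 : (0:ℝ) < p - 1 := by linarith
  have hq1 : 1 < q := by rw [hq, lt_div_iff₀ hp1]; linarith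
  set c := p / (p + 1) ^ (1 / q) with hc
  have hc1 : 1 < c := aux_one_lt_c p q hp hq
  have hc0 : 0 < c := by linarith
  set d : ℝ := (c ^ (-p) + 1) / 2 with hd
  have hcp0 : 0 < c ^ (-p) := Real.rpow_pos_of_pos hc0 _
  have hcp1 : c ^ (-p) < 1 := Real.rpow_lt_one_of_one_lt_of_neg hc1 (by linarith)
  have hd0 : 0 < d := by rw [hd]; linarith
  have hd1 : d < 1 := by rw [hd]; linarith
  have hdc : c ^ (-p) < d := by rw [hd]; linarith
  -- bound on (d, 1]
  have hdp : d ^ (1/p) < 1 := Real.rpow_lt_one hd0.le hd1 (by positivity)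
  have hnear : 1 / d ^ (1/p) < c := by
    rw [div_lt_iff₀ (Real.rpow_pos_of_pos hd0 _)]
    have h1 : (c ^ (-p)) ^ (1/p) < d ^ (1/p) :=
      Real.rpow_lt_rpow hcp0.le hdc (by positivity)
    have h2 : (c ^ (-p)) ^ (1/p) = c⁻¹ := by
      rw [← Real.rpow_mul hc0.le]
      rw [show -p * (1/p) = -1 by field_simp]
      exact Real.rpow_neg_one c
    rw [h2] at h1
    calc (1:ℝ) = c * c⁻¹ := by field_simp
      _ < c * d ^ (1/p) := by
          exact mul_lt_mul_of_pos_left h1 hc0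
  -- bound on (0, d]
  set B : ℝ := c * (1 - (1 - d) ^ (p + 1)) ^ (1/q) with hB
  have hAd0 : (0:ℝ) ≤ 1 - (1 - d) ^ (p + 1) := by
    have : (1 - d) ^ (p + 1) ≤ 1 :=
      Real.rpow_le_one (by linarith) (by linarith) (by linarith)
    linarith
  have hAd1 : 1 - (1 - d) ^ (p + 1) < 1 := by
    have : (0:ℝ) < (1 - d) ^ (p + 1) := Real.rpow_pos_of_pos (by linarith) _
    linarith
  have hBc : B < c := by
    rw [hB]
    calc c * (1 - (1 - d) ^ (p + 1)) ^ (1/q) < c * 1 := by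
          refine mul_lt_mul_of_pos_left ?_ hc0
          exact Real.rpow_lt_one hAd0 hAd1 (by positivity)
      _ = c := mul_one c
  -- overall bound
  set M : ℝ := max B (1 / d ^ (1/p)) with hM
  have hMc : M < c := max_lt hBc hnear
  have hM0 : 0 ≤ M := le_trans (by positivity) (le_max_right _ _)
  refine lt_of_le_of_lt (Real.sSup_le ?_ hM0) hMc
  rintro z ⟨y, hy, rfl⟩
  have hy0 : 0 < y := hy.1
  have hy1 : y ≤ 1 := hy.2
  have hyp : 0 < y ^ (1/p) := Real.rpow_pos_of_pos hy0 _
  by_cases hyd : y ≤ d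
  · -- use Hölder bound
    refine le_trans ?_ (le_max_left B _)
    rw [div_le_iff₀ hyp, hB]
    have h1 := aux_holder p q hp hq hy
    have hA0 : (0:ℝ) ≤ 1 - (1 - y) ^ (p + 1) := by
      have : (1 - y) ^ (p + 1) ≤ 1 :=
        Real.rpow_le_one (by linarith) (by linarith) (by linarith)
      linarith
    have hmono : (1 - (1 - y) ^ (p + 1)) ^ (1/q) ≤ (1 - (1 - d) ^ (p + 1)) ^ (1/q) := by
      refine Real.rpow_le_rpow hA0 ?_ (by positivity)
      have : (1 - d) ^ (p + 1) ≤ (1 - y) ^ (p + 1) :=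
        Real.rpow_le_rpow (by linarith) (by linarith) (by linarith)
      linarith
    calc 1 - (1 - y) ^ p ≤ c * (1 - (1 - y) ^ (p + 1)) ^ (1/q) * y ^ (1/p) := h1
      _ ≤ c * (1 - (1 - d) ^ (p + 1)) ^ (1/q) * y ^ (1/p) := by
          refine mul_le_mul_of_nonneg_right ?_ hyp.le
          exact mul_le_mul_of_nonneg_left hmono hc0.le
  · -- y > d : crude bound
    refine le_trans ?_ (le_max_right B _)
    push_neg at hyd
    have hnum : 1 - (1 - y) ^ p ≤ 1 := by
      have : (0:ℝ) ≤ (1 - y) ^ p := Real.rpow_nonneg (by linarith) _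
      linarith
    have hden : d ^ (1/p) ≤ y ^ (1/p) :=
      Real.rpow_le_rpow hd0.le hyd.le (by positivity)
    exact div_le_div₀ zero_le_one hnum (Real.rpow_pos_of_pos hd0 _) hden
end

section
/- Let p > 1. The function y ↦ (1-(1-y)^p)(1-y/2) attains its maximum on [0,1] at an interior point y* ∈ (0,1), and the maximum value β satisfies 1/2 ≤ β < p/(p+1). -/
open Real Set

set_option maxHeartbeats 1000000 in
theorem spline_beta_max (p : ℝ) (hp : 1 < p) :
    ∃ y ∈ Set.Ioo (0:ℝ) 1,
      IsMaxOn (fun y => (1 - (1 - y) ^ p) * (1 - y / 2)) (Set.Icc (0:ℝ) 1) y ∧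
      1 / 2 ≤ (1 - (1 - y) ^ p) * (1 - y / 2) ∧
      (1 - (1 - y) ^ p) * (1 - y / 2) < p / (p + 1) := by
  have hp0 : (0:ℝ) < p := by linarith
  have hcont : Continuous (fun y : ℝ => (1 - (1 - y) ^ p) * (1 - y / 2)) := by
    apply Continuous.mul
    · exact continuous_const.sub
        ((Real.continuous_rpow_const hp0.le).comp (continuous_const.sub continuous_id))
    · exact continuous_const.sub (continuous_id.div_const 2)
  obtain ⟨a, haI, hmax⟩ := isCompact_Icc.exists_isMaxOn (Set.nonempty_Icc.2 zero_le_one)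
    hcont.continuousOn
  -- test point: c = (1/2)^(1/(p-1))
  set c : ℝ := (1/2 : ℝ) ^ (1/(p-1)) with hcdef
  have hpm1 : (0:ℝ) < p - 1 := by linarith
  have hc0 : 0 < c := Real.rpow_pos_of_pos (by norm_num) _
  have hc1 : c < 1 := Real.rpow_lt_one (by norm_num) (by norm_num) (by positivity)
  have hcp1 : c ^ (p-1) = 1/2 := by
    rw [hcdef, ← Real.rpow_mul (by norm_num : (0:ℝ) ≤ 1/2),
      one_div_mul_cancel hpm1.ne', Real.rpow_one]
  have hcp : c ^ p = c / 2 := by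
    have : c ^ p = c ^ (p-1) * c ^ (1:ℝ) := by
      rw [← Real.rpow_add hc0]; ring_nf
    rw [this, hcp1, Real.rpow_one]; ring
  have htest : 1/2 < (1 - (1 - (1-c)) ^ p) * (1 - (1-c) / 2) := by
    have h1 : (1 : ℝ) - (1 - c) = c := by ring
    rw [h1, hcp]
    nlinarith [hc0, hc1]
  have hmemc : (1 - c) ∈ Set.Icc (0:ℝ) 1 := ⟨by linarith, by linarith⟩
  have hval : 1/2 < (1 - (1 - a) ^ p) * (1 - a / 2) :=
    lt_of_lt_of_le htest (hmax hmemc)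
  -- a is interior
  have ha0 : 0 < a := by
    rcases lt_or_eq_of_le haI.1 with h | h
    · exact h
    · exfalso
      rw [← h] at hval
      simp [Real.one_rpow] at hval
      linarith
  have ha1 : a < 1 := by
    rcases lt_or_eq_of_le haI.2 with h | h
    · exact h
    · exfalso
      rw [h] at hval
      simp [Real.zero_rpow hp0.ne'] at hval
      linarith
  -- derivative at a is zero
  set t : ℝ := 1 - a with htdef
  have ht0 : 0 < t := by simp [htdef]; linarith
  have ht1 : t < 1 := by simp [htdef]; linarith
  have hd1 : HasDerivAt (fun y : ℝ => 1 - y) (-1) a := by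
    simpa using (hasDerivAt_id a).const_sub 1
  have hrp : HasDerivAt (fun x : ℝ => x ^ p) (p * t ^ (p-1)) t :=
    Real.hasDerivAt_rpow_const (Or.inl ht0.ne')
  have hcomp : HasDerivAt (fun y : ℝ => (1 - y) ^ p) (p * t ^ (p-1) * (-1)) a :=
    by have h := hrp.comp a hd1; exact h
  have hA : HasDerivAt (fun y : ℝ => 1 - (1 - y) ^ p) (p * t ^ (p-1)) a := by
    simpa using hcomp.const_sub 1
  have hB : HasDerivAt (fun y : ℝ => 1 - y / 2) (-(1/2)) a := by
    simpa using ((hasDerivAt_id a).div_const 2).const_sub 1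
  have hprod : HasDerivAt (fun y : ℝ => (1 - (1 - y) ^ p) * (1 - y / 2))
      (p * t ^ (p-1) * (1 - a / 2) + (1 - (1 - a) ^ p) * -(1/2)) a := hA.mul hB
  have hloc : IsLocalMax (fun y : ℝ => (1 - (1 - y) ^ p) * (1 - y / 2)) a :=
    hmax.isLocalMax (Icc_mem_nhds ha0 ha1)
  have heq := hloc.hasDerivAt_eq_zero hprod
  -- algebra
  have hta : (1 : ℝ) - a = t := by rw [htdef]
  have ha2 : 1 - a / 2 = (1 + t) / 2 := by rw [htdef]; ring
  rw [hta, ha2] at heq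
  have hAB : t ^ p = t ^ (p-1) * t := by
    have h := Real.rpow_add ht0 (p-1) 1
    rw [Real.rpow_one] at h
    have h2 : p - 1 + 1 = p := by ring
    rw [h2] at h
    exact h
  have hE : p * t ^ (p-1) * (1 + t) = 1 - t ^ p := by linear_combination 2 * heq
  have hApos : 0 < t ^ (p-1) := Real.rpow_pos_of_pos ht0 _
  -- Bernoulli
  have hBern : 1 + p * (t - 1) < t ^ p := by
    have := one_add_mul_self_lt_rpow_one_add (s := t - 1) (by linarith) (by linarith) hp
    simpa using this
  -- key bound : (p+1) t^2 < p - 1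
  have step1 : p * t ^ (p-1) * (1 + t) < p * (1 - t) := by
    rw [hE]; linarith
  have step2 : t ^ (p-1) * (1 + t) < 1 - t := by
    have h := (mul_lt_mul_iff_right₀ hp0).mp (by linarith [step1] :
      p * (t ^ (p-1) * (1 + t)) < p * (1 - t))
    exact h
  have step3 : t ^ p * (1 + t) < t * (1 - t) := by
    have := mul_lt_mul_of_pos_left step2 ht0
    rw [hAB]; nlinarith [this]
  have hT : (p + 1) * t ^ 2 < p - 1 := by
    nlinarith [mul_lt_mul_of_pos_right hBern (by linarith : (0:ℝ) < 1 + t), step3]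
  -- conclude the upper bound
  have hAsum : t ^ (p-1) * (p + (p+1) * t) = 1 := by
    linear_combination hE - hAB
  have hpp1 : (0:ℝ) < p + 1 := by linarith
  have hupper : (1 - t ^ p) * ((1 + t) / 2) < p / (p + 1) := by
    rw [← hE, lt_div_iff₀ hpp1]
    have h2 : (p+1) * (1+t)^2 < 2 * (p + (p+1)*t) := by nlinarith [hT]
    have h3 : t ^ (p-1) * ((p+1) * (1+t)^2) < t ^ (p-1) * (2 * (p + (p+1)*t)) :=
      mul_lt_mul_of_pos_left h2 hApos
    have h4 : p * (t ^ (p-1) * ((p+1) * (1+t)^2)) < p * (t ^ (p-1) * (2 * (p + (p+1)*t))) :=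
      mul_lt_mul_of_pos_left h3 hp0
    have h5 : p * (t ^ (p-1) * (2 * (p + (p+1)*t))) = 2 * p := by
      linear_combination (2 * p) * hAsum
    have h6 : p * (t ^ (p-1) * ((p+1) * (1+t)^2)) < 2 * p := by rw [← h5]; exact h4
    calc p * t ^ (p-1) * (1+t) * ((1+t)/2) * (p+1)
        = p * (t ^ (p-1) * ((p+1) * (1+t)^2)) / 2 := by ring
      _ < 2*p/2 := by gcongr ?_ / 2
      _ = p := by ring
  refine ⟨a, ⟨ha0, ha1⟩, hmax, by linarith [hval], ?_⟩
  rw [hta, ha2]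
  exact hupper
end
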